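/- The 7×7 matrix over the sixth roots of unity given by M = [[-1,1,1,1,1,1,1],[1,-ω,ω,ω,ω²,1,1],[1,ω,-ω,ω,1,ω²,1],[1,ω,ω,-ω,1,1,ω²],[1,ω²,1,1,-ω,ω,ω],[1,1,ω²,1,ω,-ω,ω],[1,1,1,ω²,ω,ω,-ω]], where ω is a primitive cube root of unity, satisfies M·M* = 7·I₇, where M* is the conjugate transpose. -/

import Mathlib

set_option maxHeartbeats 2000000


lemma my_cons_val_five {α : Type*} (a : α) (u : Fin 6 → α) :
    Matrix.vecCons a u 5 = u 4 := rfl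

lemma my_cons_val_six {α : Type*} (a : α) (u : Fin 6 → α) :
    Matrix.vecCons a u 6 = u 5 := rfl

lemma my_cons_val_five' {α : Type*} (a : α) (u : Fin 5 → α) :
    Matrix.vecCons a u 5 = u 4 := rfl

theorem stmt_8 (ω : ℂ) (h3 : ω ^ 3 = 1) (hsum : 1 + ω + ω ^ 2 = 0) :
    let M : Matrix (Fin 7) (Fin 7) ℂ :=
      !![-1, 1, 1, 1, 1, 1, 1;
         1, -ω, ω, ω, ω ^ 2, 1, 1;
         1, ω, -ω, ω, 1, ω ^ 2, 1;
         1, ω, ω, -ω, 1, 1, ω ^ 2;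
         1, ω ^ 2, 1, 1, -ω, ω, ω;
         1, 1, ω ^ 2, 1, ω, -ω, ω;
         1, 1, 1, ω ^ 2, ω, ω, -ω]
    M * M.conjTranspose = (7 : ℂ) • (1 : Matrix (Fin 7) (Fin 7) ℂ) := by
  intro M
  have hω0 : ω ≠ 0 := by
    intro h; rw [h] at h3; simp at h3
  have habs : ‖ω‖ = 1 := by
    have h : ‖ω ^ 3‖ = ‖(1 : ℂ)‖ := by rw [h3]
    rw [norm_pow, norm_one] at h
    nlinarith [norm_nonneg ω, sq_nonneg (‖ω‖ - 1), sq_nonneg (‖ω‖ + 1)]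
  have hns : (Complex.normSq ω : ℂ) = 1 := by
    rw [Complex.normSq_eq_norm_sq, habs]; norm_num
  have hstar : (starRingEnd ℂ) ω = ω ^ 2 := by
    have hmc : ω * (starRingEnd ℂ) ω = 1 := by
      rw [Complex.mul_conj, hns]
    have : ω * (starRingEnd ℂ) ω = ω * ω ^ 2 := by
      rw [hmc, ← h3]; ring
    exact mul_left_cancel₀ hω0 this
  ext i j
  fin_cases i <;> fin_cases j <;>
    simp [M, Matrix.mul_apply, Matrix.conjTranspose_apply, Fin.sum_univ_seven,
      Matrix.one_apply, hstar, my_cons_val_five, my_cons_val_six, my_cons_val_five', map_pow, map_neg, map_one] <;>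
    first
      | ring1
      | linear_combination hsum
      | linear_combination (1 - ω + ω ^ 3) * hsum
      | linear_combination (1 - ω + ω ^ 2) * hsum
      | linear_combination (1 + ω - ω ^ 3) * hsum
      | linear_combination (2 - 2 * ω + ω ^ 2) * hsum
      | linear_combination (-4 + 4 * ω - ω ^ 3 + ω ^ 4) * hsum
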